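/- Sparse filtering preserves cosine neighbourhoodness: let x₁, x₂ ∈ ℝ^M be nonzero vectors with cosine distance D_C(x₁,x₂) ≤ δ for some δ ∈ [0,1), let W ∈ ℝ^{L×M} have rows w_1,…,w_L, let c_1,…,c_L > 0, and suppose Wx₁ ≠ 0. Set k = ⟨x₁,x₂⟩/‖x₁‖₂² (which is positive since δ < 1). Then the Euclidean distance between the SF representations is bounded by ‖z(x₁) − z(x₂)‖₂ ≤ (2·√(2δ−δ²)·‖x₂‖₂·√(Σ_{l=1}^L ‖w_l‖₂²/c_l²)) / (k·‖f̃(x₁)‖₂); in particular the bound tends to 0 as δ → 0. (Corrected explicit form of the paper's Theorem 1 / Appendix C: if the cosine distance between two original samples is arbitrarily small, then the Euclidean distance between their SF representations is arbitrarily small, with an explicit constant.) -/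

import Mathlib

open RealInnerProductSpace

lemma sf_normalize_sub_le {E : Type*} [NormedAddCommGroup E] [NormedSpace ℝ E]
    (u v : E) (hu : u ≠ 0) (hv : v ≠ 0) :
    ‖‖u‖⁻¹ • u - ‖v‖⁻¹ • v‖ ≤ 2 * ‖u - v‖ / ‖u‖ := by
  have hu0 : (0:ℝ) < ‖u‖ := norm_pos_iff.mpr hu
  have hv0 : (0:ℝ) < ‖v‖ := norm_pos_iff.mpr hv
  have h1 : ‖‖u‖⁻¹ • u - ‖u‖⁻¹ • v‖ = ‖u - v‖ / ‖u‖ := by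
    rw [← smul_sub, norm_smul, Real.norm_eq_abs, abs_of_pos (inv_pos.mpr hu0)]
    ring
  have h2 : ‖‖u‖⁻¹ • v - ‖v‖⁻¹ • v‖ ≤ ‖u - v‖ / ‖u‖ := by
    rw [← sub_smul, norm_smul, Real.norm_eq_abs]
    have key : ‖u‖⁻¹ - ‖v‖⁻¹ = (‖v‖ - ‖u‖) / (‖u‖ * ‖v‖) := by
      field_simp
    rw [key, abs_div, abs_of_pos (mul_pos hu0 hv0)]
    have h3 : |‖v‖ - ‖u‖| ≤ ‖u - v‖ := by
      rw [← norm_neg (u - v), neg_sub]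
      exact abs_norm_sub_norm_le v u
    calc |‖v‖ - ‖u‖| / (‖u‖ * ‖v‖) * ‖v‖ = |‖v‖ - ‖u‖| / ‖u‖ := by
          field_simp
      _ ≤ ‖u - v‖ / ‖u‖ := by gcongr
  calc ‖‖u‖⁻¹ • u - ‖v‖⁻¹ • v‖
      ≤ ‖‖u‖⁻¹ • u - ‖u‖⁻¹ • v‖ + ‖‖u‖⁻¹ • v - ‖v‖⁻¹ • v‖ := by
        have := norm_sub_le (‖u‖⁻¹ • u - ‖u‖⁻¹ • v) (‖v‖⁻¹ • v - ‖u‖⁻¹ • v)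
        rw [sub_sub_sub_cancel_right] at this
        calc ‖‖u‖⁻¹ • u - ‖v‖⁻¹ • v‖ ≤ _ := this
          _ = _ := by rw [← norm_neg (‖v‖⁻¹ • v - ‖u‖⁻¹ • v), neg_sub]
    _ ≤ ‖u - v‖ / ‖u‖ + ‖u - v‖ / ‖u‖ := by rw [h1]; gcongr
    _ = 2 * ‖u - v‖ / ‖u‖ := by ring

set_option maxHeartbeats 1000000 in
/-- Corrected explicit form of the paper's Theorem 1 / Appendix C: if the cosine
distance between two original samples is at most δ, then the Euclidean distance
between their SF representations is bounded by an explicit constant that tends to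
0 as δ → 0. -/
theorem sf_preserves_cosine_neighbourhoodness
    (L M : ℕ)
    (x₁ x₂ : EuclideanSpace ℝ (Fin M)) (hx₁ : x₁ ≠ 0) (hx₂ : x₂ ≠ 0)
    (δ : ℝ) (hδ0 : 0 ≤ δ) (hδ1 : δ < 1)
    (hcos : 1 - ⟪x₁, x₂⟫ / (‖x₁‖ * ‖x₂‖) ≤ δ)
    (w : Fin L → EuclideanSpace ℝ (Fin M)) (c : Fin L → ℝ) (hc : ∀ l, 0 < c l)
    (hWx₁ : ∃ l, ⟪w l, x₁⟫ ≠ 0) (hWx₂ : ∃ l, ⟪w l, x₂⟫ ≠ 0)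
    (ftilde : EuclideanSpace ℝ (Fin M) → EuclideanSpace ℝ (Fin L))
    (hft : ∀ x l, ftilde x l = |⟪w l, x⟫| / c l)
    (z : EuclideanSpace ℝ (Fin M) → EuclideanSpace ℝ (Fin L))
    (hz : ∀ x, z x = (‖ftilde x‖)⁻¹ • ftilde x)
    (k : ℝ) (hk : k = ⟪x₁, x₂⟫ / ‖x₁‖ ^ 2) :
    ‖z x₁ - z x₂‖ ≤
      (2 * Real.sqrt (2 * δ - δ ^ 2) * ‖x₂‖ *
          Real.sqrt (∑ l, ‖w l‖ ^ 2 / (c l) ^ 2)) /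
        (k * ‖ftilde x₁‖) := by
  obtain ⟨l₁, hl₁⟩ := hWx₁
  obtain ⟨l₂, hl₂⟩ := hWx₂
  have hx₁n : 0 < ‖x₁‖ := norm_pos_iff.mpr hx₁
  have hx₂n : 0 < ‖x₂‖ := norm_pos_iff.mpr hx₂
  have hN : 0 < ‖x₁‖ * ‖x₂‖ := mul_pos hx₁n hx₂n
  have hip : (1 - δ) * (‖x₁‖ * ‖x₂‖) ≤ ⟪x₁, x₂⟫ := by
    have h' : 1 - δ ≤ ⟪x₁, x₂⟫ / (‖x₁‖ * ‖x₂‖) := by linarith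
    calc (1 - δ) * (‖x₁‖ * ‖x₂‖) ≤ ⟪x₁, x₂⟫ / (‖x₁‖ * ‖x₂‖) * (‖x₁‖ * ‖x₂‖) := by
          gcongr
      _ = ⟪x₁, x₂⟫ := div_mul_cancel₀ _ hN.ne'
  have hip0 : 0 < ⟪x₁, x₂⟫ :=
    lt_of_lt_of_le (mul_pos (by linarith) hN) hip
  have hk0 : 0 < k := by rw [hk]; positivity
  have hft₁ : ftilde x₁ ≠ 0 := by
    intro h
    apply hl₁
    have h0 : ftilde x₁ l₁ = 0 := by rw [h]; rfl
    rw [hft] at h0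
    exact abs_eq_zero.mp ((div_eq_zero_iff.mp h0).resolve_right (hc l₁).ne')
  have hft₂ : ftilde x₂ ≠ 0 := by
    intro h
    apply hl₂
    have h0 : ftilde x₂ l₂ = 0 := by rw [h]; rfl
    rw [hft] at h0
    exact abs_eq_zero.mp ((div_eq_zero_iff.mp h0).resolve_right (hc l₂).ne')
  have hftn₁ : 0 < ‖ftilde x₁‖ := norm_pos_iff.mpr hft₁
  set u : EuclideanSpace ℝ (Fin L) := k • ftilde x₁ with hu
  set v : EuclideanSpace ℝ (Fin L) := ftilde x₂ with hv
  have hune : u ≠ 0 := smul_ne_zero hk0.ne' hft₁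
  have hun : ‖u‖ = k * ‖ftilde x₁‖ := by
    rw [hu, norm_smul, Real.norm_eq_abs, abs_of_pos hk0]
  have hz₁ : z x₁ = ‖u‖⁻¹ • u := by
    rw [hz, hu, hun, smul_smul]
    congr 1
    field_simp
  have hz₂ : z x₂ = ‖v‖⁻¹ • v := hz x₂
  -- bound on ‖k • x₁ - x₂‖
  set D : ℝ := ‖(k • x₁ - x₂ : EuclideanSpace ℝ (Fin M))‖ with hD
  have hDsq : D ^ 2 = ‖x₂‖ ^ 2 - ⟪x₁, x₂⟫ ^ 2 / ‖x₁‖ ^ 2 := by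
    have expand : D ^ 2 = ‖(k • x₁ : EuclideanSpace ℝ (Fin M))‖ ^ 2
        - 2 * ⟪(k • x₁ : EuclideanSpace ℝ (Fin M)), x₂⟫ + ‖x₂‖ ^ 2 := by
      rw [hD]
      exact norm_sub_sq_real _ _
    rw [expand, norm_smul, real_inner_smul_left, Real.norm_eq_abs,
      abs_of_pos hk0, hk]
    field_simp
    ring
  have hDle : D ≤ Real.sqrt (2 * δ - δ ^ 2) * ‖x₂‖ := by
    have hNpos : (0:ℝ) ≤ (1 - δ) * (‖x₁‖ * ‖x₂‖) :=
      mul_nonneg (by linarith) (by positivity)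
    have h1 : ((1 - δ) * (‖x₁‖ * ‖x₂‖)) ^ 2 ≤ ⟪x₁, x₂⟫ ^ 2 :=
      pow_le_pow_left₀ hNpos hip 2
    have h1' : (1 - δ) ^ 2 * ‖x₂‖ ^ 2 ≤ ⟪x₁, x₂⟫ ^ 2 / ‖x₁‖ ^ 2 := by
      rw [le_div_iff₀ (by positivity)]
      nlinarith [h1]
    have h2 : D ^ 2 ≤ (2 * δ - δ ^ 2) * ‖x₂‖ ^ 2 := by
      rw [hDsq]
      nlinarith [h1']
    have h3 : D = Real.sqrt (D ^ 2) := (Real.sqrt_sq (norm_nonneg _)).symm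
    rw [h3]
    calc Real.sqrt (D ^ 2) ≤ Real.sqrt ((2 * δ - δ ^ 2) * ‖x₂‖ ^ 2) :=
          Real.sqrt_le_sqrt h2
      _ = Real.sqrt (2 * δ - δ ^ 2) * ‖x₂‖ := by
          rw [Real.sqrt_mul (by nlinarith), Real.sqrt_sq (norm_nonneg _)]
  -- componentwise bound
  have hcomp : ∀ l, ‖(u - v) l‖ ≤ ‖w l‖ * D / c l := by
    intro l
    have hcl : 0 < c l := hc l
    have happ : (u - v) l = (k * |⟪w l, x₁⟫| - |⟪w l, x₂⟫|) / c l := by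
      have h' : (u - v) l = k * ftilde x₁ l - ftilde x₂ l := by
        simp [hu, hv, PiLp.sub_apply, PiLp.smul_apply, smul_eq_mul]
      rw [h', hft, hft]
      field_simp
    rw [happ, Real.norm_eq_abs, abs_div, abs_of_pos hcl]
    have hkabs : k * |⟪w l, x₁⟫| = |k * ⟪w l, x₁⟫| := by
      rw [abs_mul, abs_of_pos hk0]
    rw [hkabs]
    have hinner : k * ⟪w l, x₁⟫ - ⟪w l, x₂⟫
        = ⟪w l, (k • x₁ - x₂ : EuclideanSpace ℝ (Fin M))⟫ := by
      rw [inner_sub_right, real_inner_smul_right]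
    have hcs : |⟪w l, (k • x₁ - x₂ : EuclideanSpace ℝ (Fin M))⟫| ≤ ‖w l‖ * D := by
      rw [hD]
      exact abs_real_inner_le_norm _ _
    have htri : |(|k * ⟪w l, x₁⟫| - |⟪w l, x₂⟫|)| ≤ ‖w l‖ * D := by
      calc |(|k * ⟪w l, x₁⟫| - |⟪w l, x₂⟫|)| ≤ |k * ⟪w l, x₁⟫ - ⟪w l, x₂⟫| :=
            abs_abs_sub_abs_le_abs_sub _ _
        _ = _ := by rw [hinner]
        _ ≤ ‖w l‖ * D := hcs
    exact div_le_div_of_nonneg_right htri hcl.le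
  -- sum bound
  have hsum : ‖u - v‖ ≤ D * Real.sqrt (∑ l, ‖w l‖ ^ 2 / (c l) ^ 2) := by
    have hD0 : 0 ≤ D := norm_nonneg _
    rw [EuclideanSpace.norm_eq]
    have hs : ∑ l, ‖(u - v) l‖ ^ 2 ≤ ∑ l, (‖w l‖ * D / c l) ^ 2 := by
      apply Finset.sum_le_sum
      intro l _
      have h1 := hcomp l
      have h2 : 0 ≤ ‖(u - v) l‖ := norm_nonneg _
      nlinarith
    calc Real.sqrt (∑ l, ‖(u - v) l‖ ^ 2)
        ≤ Real.sqrt (∑ l, (‖w l‖ * D / c l) ^ 2) := Real.sqrt_le_sqrt hs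
      _ = Real.sqrt (D ^ 2 * ∑ l, ‖w l‖ ^ 2 / (c l) ^ 2) := by
          congr 1
          rw [Finset.mul_sum]
          apply Finset.sum_congr rfl
          intro l _
          have hcl : c l ≠ 0 := (hc l).ne'
          field_simp
      _ = D * Real.sqrt (∑ l, ‖w l‖ ^ 2 / (c l) ^ 2) := by
          rw [Real.sqrt_mul (sq_nonneg D), Real.sqrt_sq hD0]
  -- conclude
  have hmain : ‖z x₁ - z x₂‖ ≤ 2 * ‖u - v‖ / ‖u‖ := by
    rw [hz₁, hz₂]
    exact sf_normalize_sub_le u v hune hft₂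
  refine hmain.trans ?_
  rw [hun]
  have hden : 0 < k * ‖ftilde x₁‖ := mul_pos hk0 hftn₁
  rw [div_le_div_iff₀ hden hden]
  have huv : ‖u - v‖ ≤ Real.sqrt (2 * δ - δ ^ 2) * ‖x₂‖
      * Real.sqrt (∑ l, ‖w l‖ ^ 2 / (c l) ^ 2) := by
    calc ‖u - v‖ ≤ D * Real.sqrt (∑ l, ‖w l‖ ^ 2 / (c l) ^ 2) := hsum
      _ ≤ (Real.sqrt (2 * δ - δ ^ 2) * ‖x₂‖) * Real.sqrt (∑ l, ‖w l‖ ^ 2 / (c l) ^ 2) :=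
          mul_le_mul_of_nonneg_right hDle (Real.sqrt_nonneg _)
  nlinarith [huv, hden]
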